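/- Let b ≥ 1 be an integer, let g be a nonzero complex number, and let ω ∈ ℝ. Then A(ψ̂_g(ω)·g, exp(iω)) ≤ π/2^b. -/
import Mathlib


open scoped Real

/-- Internal angle between two complex numbers:
`A(x, y) = π − | |arg x − arg y| − π |`. -/
noncomputable def intAngle (x y : ℂ) : ℝ :=
  π - |(|Complex.arg x - Complex.arg y|) - π|

/-- The ω-beamformer phase
`ψ̂_g(ω) = exp(i·(2π/2^b)·round(−(2^b/(2π))·arg g + (2^b/(2π))·ω))`. -/
noncomputable def psiHat (b : ℕ) (g : ℂ) (ω : ℝ) : ℂ :=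
  Complex.exp (Complex.I * ((2 * π / 2 ^ b : ℝ) : ℂ) *
    ((round ((-(2 ^ b / (2 * π)) * Complex.arg g + (2 ^ b / (2 * π)) * ω : ℝ)) : ℤ) : ℂ))

lemma arg_exp_I_coe_angle (c : ℝ) :
    (Complex.arg (Complex.exp (Complex.I * (c : ℂ))) : Real.Angle) = (c : Real.Angle) := by
  have := Complex.arg_cos_add_sin_mul_I_coe_angle (c : Real.Angle)
  rw [Real.Angle.cos_coe, Real.Angle.sin_coe, Complex.ofReal_cos, Complex.ofReal_sin] at this
  rwa [mul_comm, Complex.exp_mul_I]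

lemma key_ineq (d t : ℝ) (hd : |d| ≤ 2 * π) (k : ℤ) (h : d - t = 2 * π * k) :
    π - |(|d| - π)| ≤ |t| := by
  have hπ := Real.pi_pos
  have hd0 : 0 ≤ |d| := abs_nonneg d
  rcases eq_or_ne k 0 with hk | hk
  · subst hk
    have ht : t = d := by push_cast at h; linarith
    rw [ht]
    rcases abs_cases (|d| - π) with ⟨h1, h2⟩ | ⟨h1, h2⟩ <;> linarith
  · have hk1 : (1 : ℝ) ≤ |(k : ℝ)| := by
      have := Int.one_le_abs hk
      calc (1:ℝ) ≤ (|k| : ℤ) := by exact_mod_cast this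
        _ = |(k:ℝ)| := by push_cast; ring
    have ht : t = d - 2 * π * k := by linarith
    have h2 : |(2 * π * k : ℝ)| = 2 * π * |(k:ℝ)| := by
      rw [abs_mul, abs_of_pos (by linarith : (0:ℝ) < 2 * π)]
    have h3 : |(2 * π * k : ℝ)| - |d| ≤ |t| := by
      rw [ht]
      calc |(2 * π * k : ℝ)| - |d| ≤ |2 * π * k - d| := abs_sub_abs_le_abs_sub _ _
        _ = |d - 2 * π * k| := abs_sub_comm _ _
    have h4 : 2 * π ≤ |(2 * π * k : ℝ)| := by
      rw [h2]; nlinarith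
    rcases abs_cases (|d| - π) with ⟨h5, h6⟩ | ⟨h5, h6⟩ <;> linarith

theorem stmt7 {b : ℕ} (hb : 1 ≤ b) (g : ℂ) (hg : g ≠ 0) (ω : ℝ) :
    intAngle (psiHat b g ω * g) (Complex.exp (Complex.I * (ω : ℂ))) ≤ π / 2 ^ b := by
  have hπ := Real.pi_pos
  have h2b : (0:ℝ) < 2 ^ b := by positivity
  set θ := Complex.arg g with hθ
  set x : ℝ := -(2 ^ b / (2 * π)) * θ + (2 ^ b / (2 * π)) * ω with hx
  set r : ℤ := round x with hr
  set c : ℝ := 2 * π / 2 ^ b * r with hc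
  have hψ : psiHat b g ω = Complex.exp (Complex.I * (c : ℂ)) := by
    rw [psiHat, hc, hr, hx, hθ]
    push_cast
    ring_nf
  have hψ0 : psiHat b g ω ≠ 0 := by rw [hψ]; exact Complex.exp_ne_zero _
  -- angle identity
  have hang : ((Complex.arg (psiHat b g ω * g) -
      Complex.arg (Complex.exp (Complex.I * (ω : ℂ))) : ℝ) : Real.Angle)
      = ((c + θ - ω : ℝ) : Real.Angle) := by
    rw [Real.Angle.coe_sub, Complex.arg_mul_coe_angle hψ0 hg, hψ,
      arg_exp_I_coe_angle, arg_exp_I_coe_angle]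
    rw [Real.Angle.coe_sub, Real.Angle.coe_add]
  rw [Real.Angle.angle_eq_iff_two_pi_dvd_sub] at hang
  obtain ⟨k, hk⟩ := hang
  set d : ℝ := Complex.arg (psiHat b g ω * g) -
      Complex.arg (Complex.exp (Complex.I * (ω : ℂ))) with hd
  have hdle : |d| ≤ 2 * π := by
    have h1 := Complex.abs_arg_le_pi (psiHat b g ω * g)
    have h2 := Complex.abs_arg_le_pi (Complex.exp (Complex.I * (ω : ℂ)))
    calc |d| ≤ |Complex.arg (psiHat b g ω * g)| +
        |Complex.arg (Complex.exp (Complex.I * (ω : ℂ)))| := abs_sub _ _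
      _ ≤ 2 * π := by linarith
  have hmain : intAngle (psiHat b g ω * g) (Complex.exp (Complex.I * (ω : ℂ)))
      ≤ |c + θ - ω| := key_ineq d (c + θ - ω) hdle k hk
  refine hmain.trans ?_
  -- |c + θ - ω| ≤ π / 2^b
  have hxval : c + θ - ω = 2 * π / 2 ^ b * (r - x) := by
    rw [hc, hx]
    field_simp
    ring
  rw [hxval, abs_mul, abs_of_pos (by positivity : (0:ℝ) < 2 * π / 2 ^ b)]
  have hround : |(r : ℝ) - x| ≤ 1 / 2 := by
    rw [hr, abs_sub_comm]
    exact abs_sub_round x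
  calc 2 * π / 2 ^ b * |(r:ℝ) - x| ≤ 2 * π / 2 ^ b * (1 / 2) := by
        apply mul_le_mul_of_nonneg_left hround (by positivity)
    _ = π / 2 ^ b := by ring
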